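/- arXiv:2312.03472 — 3 statements merged into one kernel-verified Lean document; each statement's English description precedes it below -/
import Mathlib

section
/- Under the same hypotheses (g Lipschitz, $X^{(1)}_t-\phi^1(t)=\int_0^t[g(X_s)-g(\phi(s))]ds$ with $X=(X^{(1)},X^{(2)})$, $\phi=(\phi^1,\phi^2)$), for every $p\ge 1$ there is a constant $\tau_2>0$ with $\|X^{(1)}-\phi^1\|_{L^p([0,1],\mathbb{R}^d)}\le \tau_2\,\|X^{(2)}-\phi^2\|_{L^p([0,1],\mathbb{R}^m)}$. -/
open MeasureTheory intervalIntegral Set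

/-- **(H4) for `Lᵖ`-norms.** If `g` is Lipschitz and
`X⁽¹⁾ₜ - φ¹(t) = ∫₀ᵗ [g(Xₛ) - g(φ(s))] ds` with `X = (X⁽¹⁾, X⁽²⁾)`, `φ = (φ¹, φ²)`, then
for every `p ≥ 1` there is a constant `τ₂ > 0` with
`‖X⁽¹⁾ - φ¹‖_{Lᵖ([0,1])} ≤ τ₂ ‖X⁽²⁾ - φ²‖_{Lᵖ([0,1])}`. -/
theorem Lp_norm_controllability (d m : ℕ) (p : ℝ) (hp : 1 ≤ p) (L : NNReal) :
    ∃ τ₂ : ℝ, 0 < τ₂ ∧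
      ∀ (g : EuclideanSpace ℝ (Fin d) × EuclideanSpace ℝ (Fin m) → EuclideanSpace ℝ (Fin d))
        (X₁ φ₁ : ℝ → EuclideanSpace ℝ (Fin d)) (X₂ φ₂ : ℝ → EuclideanSpace ℝ (Fin m)),
        LipschitzWith L g →
        ContinuousOn X₁ (Icc 0 1) → ContinuousOn X₂ (Icc 0 1) →
        ContinuousOn φ₁ (Icc 0 1) → ContinuousOn φ₂ (Icc 0 1) →
        (∀ t ∈ Icc (0:ℝ) 1,
          X₁ t - φ₁ t = ∫ s in (0:ℝ)..t, (g (X₁ s, X₂ s) - g (φ₁ s, φ₂ s))) →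
        (∫ t in (0:ℝ)..1, ‖X₁ t - φ₁ t‖ ^ p) ^ (1 / p) ≤
          τ₂ * (∫ t in (0:ℝ)..1, ‖X₂ t - φ₂ t‖ ^ p) ^ (1 / p) := by
  have hp0 : (0:ℝ) < p := lt_of_lt_of_le one_pos hp
  set K : ℝ := (L:ℝ) + 1 with hKdef
  have hK0 : 0 < K := by positivity
  refine ⟨K * Real.exp K, by positivity, ?_⟩
  intro g X₁ φ₁ X₂ φ₂ hg hX₁ hX₂ hφ₁ hφ₂ heq
  set e : ℝ → EuclideanSpace ℝ (Fin d) := fun t => X₁ t - φ₁ t with hedef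
  set u : ℝ → EuclideanSpace ℝ (Fin m) := fun t => X₂ t - φ₂ t with hudef
  set h : ℝ → EuclideanSpace ℝ (Fin d) :=
    fun s => g (X₁ s, X₂ s) - g (φ₁ s, φ₂ s) with hhdef
  have he_cont : ContinuousOn e (Icc 0 1) := hX₁.sub hφ₁
  have hu_cont : ContinuousOn u (Icc 0 1) := hX₂.sub hφ₂
  have hh_cont : ContinuousOn h (Icc 0 1) :=
    (hg.continuous.comp_continuousOn (hX₁.prodMk hX₂)).sub
      (hg.continuous.comp_continuousOn (hφ₁.prodMk hφ₂))
  -- Lipschitz pointwise bound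
  have hbound : ∀ s, ‖h s‖ ≤ K * ‖e s‖ + K * ‖u s‖ := by
    intro s
    have h1 := hg.dist_le_mul (X₁ s, X₂ s) (φ₁ s, φ₂ s)
    rw [Prod.dist_eq] at h1
    simp only [dist_eq_norm] at h1
    have h2 : max ‖X₁ s - φ₁ s‖ ‖X₂ s - φ₂ s‖ ≤ ‖e s‖ + ‖u s‖ :=
      max_le (le_add_of_nonneg_right (norm_nonneg _)) (le_add_of_nonneg_left (norm_nonneg _))
    have hL : (L:ℝ) ≤ K := by simp [hKdef]
    calc ‖h s‖ ≤ (L:ℝ) * max ‖X₁ s - φ₁ s‖ ‖X₂ s - φ₂ s‖ := h1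
      _ ≤ K * (‖e s‖ + ‖u s‖) := by
          apply mul_le_mul hL h2 (le_max_iff.2 (Or.inl (norm_nonneg _))) hK0.le
      _ = K * ‖e s‖ + K * ‖u s‖ := by ring
  -- integrability of the norms
  have hwe : ContinuousOn (fun s => ‖e s‖) (Icc 0 1) := he_cont.norm
  have hwu : ContinuousOn (fun s => ‖u s‖) (Icc 0 1) := hu_cont.norm
  have hInt : ∀ {w : ℝ → ℝ}, ContinuousOn w (Icc 0 1) → ∀ t ∈ Icc (0:ℝ) 1,
      IntervalIntegrable w volume 0 t := by
    intro w hw t ht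
    apply ContinuousOn.intervalIntegrable
    rw [uIcc_of_le ht.1]
    exact hw.mono (Icc_subset_Icc le_rfl ht.2)
  set I : ℝ := ∫ s in (0:ℝ)..1, ‖u s‖ with hIdef
  have hI0 : 0 ≤ I := intervalIntegral.integral_nonneg zero_le_one fun s _ => norm_nonneg _
  set ε : ℝ := K * I with hεdef
  have hε0 : 0 ≤ ε := mul_nonneg hK0.le hI0
  set F : ℝ → ℝ := fun t => ∫ s in (0:ℝ)..t, ‖e s‖ with hFdef
  have hF0 : ∀ t ∈ Icc (0:ℝ) 1, 0 ≤ F t := fun t ht =>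
    intervalIntegral.integral_nonneg ht.1 fun s _ => norm_nonneg _
  -- key pointwise estimate
  have hEst : ∀ t ∈ Icc (0:ℝ) 1, ‖e t‖ ≤ K * F t + ε := by
    intro t ht
    have h1 : ‖e t‖ ≤ ∫ s in (0:ℝ)..t, ‖h s‖ := by
      rw [hedef]
      simp only
      rw [heq t ht]
      exact intervalIntegral.norm_integral_le_integral_norm ht.1
    have h2 : (∫ s in (0:ℝ)..t, ‖h s‖) ≤ ∫ s in (0:ℝ)..t, (K * ‖e s‖ + K * ‖u s‖) := by
      apply intervalIntegral.integral_mono_on ht.1 (hInt hh_cont.norm t ht)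
      · exact ((hInt hwe t ht).const_mul K).add ((hInt hwu t ht).const_mul K)
      · intro x _; exact hbound x
    have h3 : (∫ s in (0:ℝ)..t, (K * ‖e s‖ + K * ‖u s‖))
        = K * F t + K * ∫ s in (0:ℝ)..t, ‖u s‖ := by
      rw [intervalIntegral.integral_add ((hInt hwe t ht).const_mul K)
        ((hInt hwu t ht).const_mul K), intervalIntegral.integral_const_mul,
        intervalIntegral.integral_const_mul]
    have h4 : (∫ s in (0:ℝ)..t, ‖u s‖) ≤ I := by
      rw [hIdef]
      apply intervalIntegral.integral_mono_interval le_rfl ht.1 ht.2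
      · exact ae_of_all _ fun s => norm_nonneg _
      · exact hInt hwu 1 ⟨zero_le_one, le_rfl⟩
    calc ‖e t‖ ≤ K * F t + K * ∫ s in (0:ℝ)..t, ‖u s‖ := by rw [← h3]; exact h1.trans h2
      _ ≤ K * F t + K * I := by
          have := mul_le_mul_of_nonneg_left h4 hK0.le
          linarith
  -- continuity and derivative of F
  have hF_cont : ContinuousOn F (Icc 0 1) := by
    have := intervalIntegral.continuousOn_primitive_interval
      (f := fun s => ‖e s‖) (a := (0:ℝ)) (b := 1) (μ := volume) ?_
    · rwa [uIcc_of_le zero_le_one] at this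
    · rw [uIcc_of_le zero_le_one]
      exact (hwe.mono Subset.rfl).integrableOn_compact isCompact_Icc
  have hF_deriv : ∀ x ∈ Ico (0:ℝ) 1, HasDerivWithinAt F ‖e x‖ (Ici x) x := by
    intro x hx
    have hIcc : Icc (0:ℝ) 1 ∈ nhdsWithin x (Ioi x) := by
      apply nhdsWithin_mono x Ioi_subset_Ici_self
      rw [← nhdsWithin_Icc_eq_nhdsGE hx.2]
      exact Filter.mem_of_superset self_mem_nhdsWithin (Icc_subset_Icc hx.1 le_rfl)
    apply intervalIntegral.integral_hasDerivWithinAt_right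
      (hInt hwe x ⟨hx.1, hx.2.le⟩) (t := Ioi x)
    · exact ⟨Icc 0 1, hIcc, hwe.aestronglyMeasurable measurableSet_Icc⟩
    · exact ((continuousWithinAt_Icc_iff_Ici hx.2).1
        ((hwe.continuousWithinAt ⟨hx.1, hx.2.le⟩).mono
          (Icc_subset_Icc hx.1 le_rfl))).mono Ioi_subset_Ici_self
  -- Grönwall
  have hGron : ∀ x ∈ Icc (0:ℝ) 1, ‖F x‖ ≤ gronwallBound 0 K ε (x - 0) := by
    apply norm_le_gronwallBound_of_norm_deriv_right_le hF_cont hF_deriv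
    · simp [hFdef]
    · intro x hx
      rw [Real.norm_of_nonneg (norm_nonneg _),
        Real.norm_of_nonneg (hF0 x ⟨hx.1, hx.2.le⟩)]
      exact hEst x ⟨hx.1, hx.2.le⟩
  -- pointwise bound on ‖e‖
  have hePt : ∀ t ∈ Icc (0:ℝ) 1, ‖e t‖ ≤ K * Real.exp K * I := by
    intro t ht
    have h1 : F t ≤ ε / K * (Real.exp (K * t) - 1) := by
      have := hGron t ht
      rw [Real.norm_of_nonneg (hF0 t ht), gronwallBound_of_K_ne_0 hK0.ne'] at this
      simpa using this
    have hexp : Real.exp (K * t) ≤ Real.exp K := by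
      apply Real.exp_le_exp.2
      nlinarith [ht.2, hK0]
    have h2 : ‖e t‖ ≤ K * (ε / K * (Real.exp (K * t) - 1)) + ε := by
      have h6 := mul_le_mul_of_nonneg_left h1 hK0.le
      exact (hEst t ht).trans (add_le_add_left h6 ε)
    have h3 : K * (ε / K * (Real.exp (K * t) - 1)) + ε = ε * Real.exp (K * t) := by
      field_simp
      ring
    rw [h3] at h2
    calc ‖e t‖ ≤ ε * Real.exp (K * t) := h2
      _ ≤ ε * Real.exp K := mul_le_mul_of_nonneg_left hexp hε0
      _ = K * Real.exp K * I := by rw [hεdef]; ring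
  -- integrate the p-th power
  set M : ℝ := K * Real.exp K * I with hMdef
  have hM0 : 0 ≤ M := by positivity
  have hLp : (∫ t in (0:ℝ)..1, ‖e t‖ ^ p) ≤ M ^ p := by
    have h1 : (∫ t in (0:ℝ)..1, ‖e t‖ ^ p) ≤ ∫ t in (0:ℝ)..1, M ^ p := by
      apply intervalIntegral.integral_mono_on zero_le_one
      · apply ContinuousOn.intervalIntegrable
        rw [uIcc_of_le zero_le_one]
        exact hwe.rpow_const fun x _ => Or.inr hp0.le
      · exact intervalIntegrable_const
      · intro x hx
        exact Real.rpow_le_rpow (norm_nonneg _) (hePt x hx) hp0.le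
    simpa using h1
  have hLpnn : 0 ≤ ∫ t in (0:ℝ)..1, ‖e t‖ ^ p :=
    intervalIntegral.integral_nonneg zero_le_one fun s _ => Real.rpow_nonneg (norm_nonneg _) _
  have hMain : (∫ t in (0:ℝ)..1, ‖e t‖ ^ p) ^ (1/p) ≤ M := by
    have := Real.rpow_le_rpow hLpnn hLp (by positivity : (0:ℝ) ≤ 1/p)
    rwa [← Real.rpow_mul hM0, mul_one_div_cancel hp0.ne', Real.rpow_one] at this
  -- Hölder / Jensen : I ≤ (∫ ‖u‖^p)^(1/p)
  have hHolder : I ≤ (∫ t in (0:ℝ)..1, ‖u t‖ ^ p) ^ (1/p) := by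
    rcases eq_or_lt_of_le hp with hp1 | hp1
    · rw [← hp1]
      simp only [Real.rpow_one]
      rw [hIdef]
      simp [Real.rpow_one]
    · set q : ℝ := p / (p - 1) with hqdef
      have hpq : p.HolderConjugate q := Real.HolderConjugate.conjExponent hp1
      set μ : Measure ℝ := volume.restrict (Ioc (0:ℝ) 1) with hμdef
      have hμuniv : μ univ = 1 := by
        rw [hμdef, Measure.restrict_apply_univ, Real.volume_Ioc]
        norm_num
      have : IsFiniteMeasure μ := ⟨by rw [hμuniv]; exact ENNReal.one_lt_top⟩
      have hmeasu : AEStronglyMeasurable (fun t => ‖u t‖) μ := by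
        apply (hwu.aestronglyMeasurable measurableSet_Icc).mono_measure
        exact Measure.restrict_mono Ioc_subset_Icc_self le_rfl
      obtain ⟨C, hC⟩ := isCompact_Icc.exists_bound_of_continuousOn hwu
      have hmemu : MemLp (fun t => ‖u t‖) (ENNReal.ofReal p) μ := by
        apply MemLp.of_bound hmeasu C
        rw [hμdef]
        refine (ae_restrict_iff' measurableSet_Ioc).2 (ae_of_all _ fun x hx => ?_)
        exact hC x (Ioc_subset_Icc_self hx)
      have hmem1 : MemLp (fun _ : ℝ => (1:ℝ)) (ENNReal.ofReal q) μ := memLp_const 1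
      have hH := integral_mul_le_Lp_mul_Lq_of_nonneg (μ := μ) hpq
        (ae_of_all _ fun x => norm_nonneg (u x)) (ae_of_all _ fun _ => zero_le_one)
        hmemu hmem1
      simp only [mul_one] at hH
      have h1q : (∫ _ : ℝ, (1:ℝ) ^ q ∂μ) ^ (1/q) = 1 := by
        simp only [Real.one_rpow]
        rw [MeasureTheory.integral_const, measureReal_def, hμuniv]
        simp
      rw [h1q, mul_one] at hH
      have hIμ : I = ∫ t, ‖u t‖ ∂μ := by
        rw [hIdef, intervalIntegral.integral_of_le zero_le_one, hμdef]
      have hPμ : (∫ t in (0:ℝ)..1, ‖u t‖ ^ p) = ∫ t, ‖u t‖ ^ p ∂μ := by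
        rw [intervalIntegral.integral_of_le zero_le_one, hμdef]
      rw [hIμ, hPμ]
      exact hH
  -- conclude
  calc (∫ t in (0:ℝ)..1, ‖e t‖ ^ p) ^ (1/p) ≤ M := hMain
    _ = K * Real.exp K * I := hMdef
    _ ≤ K * Real.exp K * (∫ t in (0:ℝ)..1, ‖u t‖ ^ p) ^ (1/p) :=
        mul_le_mul_of_nonneg_left hHolder (by positivity)
end

section
/- Under the same hypotheses (g Lipschitz, $X^{(1)}_t-\phi^1(t)=\int_0^t[g(X_s)-g(\phi(s))]ds$), for every $\alpha\in(0,1)$ there is a constant $\tau_4>0$ such that the $\alpha$-Hölder seminorm satisfies $[X^{(1)}-\phi^1]_{C^\alpha([0,1],\mathbb{R}^d)}\le \tau_4\,\|X^{(2)}-\phi^2\|_{C^\alpha([0,1],\mathbb{R}^m)}$, where $\|\cdot\|_{C^\alpha}$ denotes the Hölder norm (supremum norm plus Hölder seminorm). -/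
open MeasureTheory intervalIntegral Set

set_option maxHeartbeats 1000000 in
theorem holder_aux (d m : ℕ) (L : NNReal)
    (g : EuclideanSpace ℝ (Fin d) × EuclideanSpace ℝ (Fin m) → EuclideanSpace ℝ (Fin d))
    (X₁ φ₁ : ℝ → EuclideanSpace ℝ (Fin d)) (X₂ φ₂ : ℝ → EuclideanSpace ℝ (Fin m))
    (hg : LipschitzWith L g)
    (hX₁ : ContinuousOn X₁ (Icc 0 1)) (hX₂ : ContinuousOn X₂ (Icc 0 1))
    (hφ₁ : ContinuousOn φ₁ (Icc 0 1)) (hφ₂ : ContinuousOn φ₂ (Icc 0 1))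
    (heq : ∀ t ∈ Icc (0:ℝ) 1,
      X₁ t - φ₁ t = ∫ s in (0:ℝ)..t, (g (X₁ s, X₂ s) - g (φ₁ s, φ₂ s)))
    (M : ℝ) (hM : 0 ≤ M) (hsup : ∀ t ∈ Icc (0:ℝ) 1, ‖X₂ t - φ₂ t‖ ≤ M) :
    ∀ t ∈ Icc (0:ℝ) 1, ‖X₁ t - φ₁ t‖ ≤ M * Real.exp L := by
  set h : ℝ → EuclideanSpace ℝ (Fin d) :=
    fun s => g (X₁ s, X₂ s) - g (φ₁ s, φ₂ s) with hh
  have hcont : ContinuousOn h (Icc 0 1) := by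
    apply ContinuousOn.sub
    · exact hg.continuous.comp_continuousOn (hX₁.prodMk hX₂)
    · exact hg.continuous.comp_continuousOn (hφ₁.prodMk hφ₂)
  set F : ℝ → EuclideanSpace ℝ (Fin d) := fun t => ∫ s in (0:ℝ)..t, h s with hF
  have hint : ∀ t ∈ Icc (0:ℝ) 1, IntervalIntegrable h volume 0 t := by
    intro t ht
    apply (hcont.mono _).intervalIntegrable
    rw [uIcc_of_le ht.1]
    exact Icc_subset_Icc le_rfl ht.2
  have hFcont : ContinuousOn F (Icc 0 1) := by
    have huI := intervalIntegral.continuousOn_primitive_interval (a := (0:ℝ)) (b := 1)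
      (μ := volume) (f := h) (by rw [uIcc_of_le (zero_le_one : (0:ℝ) ≤ 1)]
                                 exact hcont.integrableOn_Icc)
    rwa [uIcc_of_le (zero_le_one : (0:ℝ) ≤ 1)] at huI
  -- h bound via F
  have hbound : ∀ t ∈ Icc (0:ℝ) 1, ‖h t‖ ≤ (L:ℝ) * ‖F t‖ + (L:ℝ) * M := by
    intro t ht
    have h1 : ‖h t‖ ≤ (L:ℝ) * ‖((X₁ t, X₂ t) : _ × _) - (φ₁ t, φ₂ t)‖ := by
      simpa [dist_eq_norm] using hg.dist_le_mul (X₁ t, X₂ t) (φ₁ t, φ₂ t)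
    have h2 : ‖((X₁ t, X₂ t) : _ × _) - (φ₁ t, φ₂ t)‖ ≤ ‖X₁ t - φ₁ t‖ + ‖X₂ t - φ₂ t‖ := by
      rw [Prod.norm_def]
      exact max_le (le_add_of_nonneg_right (norm_nonneg _))
        (le_add_of_nonneg_left (norm_nonneg _))
    have h3 : ‖X₁ t - φ₁ t‖ = ‖F t‖ := by rw [heq t ht]
    calc ‖h t‖ ≤ (L:ℝ) * (‖X₁ t - φ₁ t‖ + ‖X₂ t - φ₂ t‖) :=
          h1.trans (by gcongr)
      _ ≤ (L:ℝ) * (‖F t‖ + M) := by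
          rw [h3]; gcongr; exact hsup t ht
      _ = (L:ℝ) * ‖F t‖ + (L:ℝ) * M := by ring
  -- derivative of F within Ici t
  have hderiv : ∀ t ∈ Ico (0:ℝ) 1, HasDerivWithinAt F (h t) (Ici t) t := by
    intro t ht
    have hIoc : Ioc t 1 ∈ nhdsWithin t (Ioi t) := by
      have h1 : Ioi t ∩ Iic 1 ∈ nhdsWithin t (Ioi t) :=
        Filter.inter_mem self_mem_nhdsWithin (nhdsWithin_le_nhds (Iic_mem_nhds ht.2))
      rwa [Set.Ioi_inter_Iic] at h1
    have hmeas : StronglyMeasurableAtFilter h (nhdsWithin t (Ioi t)) volume :=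
      ⟨Ioc t 1, hIoc, (hcont.mono (fun x hx => ⟨ht.1.trans hx.1.le, hx.2⟩)).aestronglyMeasurable
        measurableSet_Ioc⟩
    exact intervalIntegral.integral_hasDerivWithinAt_right
      (hint t ⟨ht.1, ht.2.le⟩) hmeas
      ((hcont t ⟨ht.1, ht.2.le⟩).mono_of_mem_nhdsWithin (by
        have : Iio (1:ℝ) ∈ nhds t := Iio_mem_nhds ht.2
        filter_upwards [Filter.inter_mem self_mem_nhdsWithin (nhdsWithin_le_nhds this)]
          with x hx
        exact ⟨ht.1.trans hx.1.le, hx.2.le⟩))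
  have hgron := norm_le_gronwallBound_of_norm_deriv_right_le (δ := 0) (K := (L:ℝ))
    (ε := (L:ℝ) * M) hFcont hderiv (by simp [hF]) (fun x hx => hbound x ⟨hx.1, hx.2.le⟩)
  intro t ht
  rw [heq t ht]
  have := hgron t ht
  refine this.trans ?_
  rcases eq_or_ne (L:ℝ) 0 with hL | hL
  · rw [hL]
    simp [gronwallBound_K0]
    positivity
  · rw [gronwallBound_of_K_ne_0 hL]
    have hLpos : (0:ℝ) < L := lt_of_le_of_ne L.coe_nonneg (Ne.symm hL)
    simp only [zero_mul, zero_add]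
    rw [show (L:ℝ) * M / (L:ℝ) = M by field_simp]
    have h1 : Real.exp ((L:ℝ) * (t - 0)) - 1 ≤ Real.exp L := by
      have : Real.exp ((L:ℝ) * (t - 0)) ≤ Real.exp L := by
        apply Real.exp_le_exp.2
        nlinarith [ht.1, ht.2]
      linarith
    exact mul_le_mul_of_nonneg_left h1 hM

/-- **(H4) for Hölder norms.** If `g` is Lipschitz and
`X⁽¹⁾ₜ - φ¹(t) = ∫₀ᵗ [g(Xₛ) - g(φ(s))] ds`, then for every `α ∈ (0,1)` there is a constant
`τ₄ > 0` such that the `α`-Hölder seminorm of `X⁽¹⁾ - φ¹` is bounded by `τ₄` times the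
`α`-Hölder norm of `X⁽²⁾ - φ²`: whenever `M` bounds both the supremum norm and the
`α`-Hölder seminorm of `X⁽²⁾ - φ²` on `[0,1]`, the increments of `X⁽¹⁾ - φ¹` satisfy
`|(X⁽¹⁾ₜ - φ¹(t)) - (X⁽¹⁾ₛ - φ¹(s))| ≤ τ₄ M |t - s|^α`. -/
theorem holder_norm_controllability (d m : ℕ) (α : ℝ) (hα : α ∈ Set.Ioo (0:ℝ) 1)
    (L : NNReal) :
    ∃ τ₄ : ℝ, 0 < τ₄ ∧
      ∀ (g : EuclideanSpace ℝ (Fin d) × EuclideanSpace ℝ (Fin m) → EuclideanSpace ℝ (Fin d))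
        (X₁ φ₁ : ℝ → EuclideanSpace ℝ (Fin d)) (X₂ φ₂ : ℝ → EuclideanSpace ℝ (Fin m)),
        LipschitzWith L g →
        ContinuousOn X₁ (Icc 0 1) → ContinuousOn X₂ (Icc 0 1) →
        ContinuousOn φ₁ (Icc 0 1) → ContinuousOn φ₂ (Icc 0 1) →
        (∀ t ∈ Icc (0:ℝ) 1,
          X₁ t - φ₁ t = ∫ s in (0:ℝ)..t, (g (X₁ s, X₂ s) - g (φ₁ s, φ₂ s))) →
        ∀ M : ℝ, 0 ≤ M →
          (∀ t ∈ Icc (0:ℝ) 1, ‖X₂ t - φ₂ t‖ ≤ M) →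
          (∀ s ∈ Icc (0:ℝ) 1, ∀ t ∈ Icc (0:ℝ) 1,
            ‖(X₂ t - φ₂ t) - (X₂ s - φ₂ s)‖ ≤ M * |t - s| ^ α) →
          ∀ s ∈ Icc (0:ℝ) 1, ∀ t ∈ Icc (0:ℝ) 1,
            ‖(X₁ t - φ₁ t) - (X₁ s - φ₁ s)‖ ≤ τ₄ * M * |t - s| ^ α := by
  refine ⟨(L:ℝ) * (Real.exp L + 1) + 1, by positivity, ?_⟩
  intro g X₁ φ₁ X₂ φ₂ hg hX₁ hX₂ hφ₁ hφ₂ heq M hM hsup _hhold s hs t ht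
  set h : ℝ → EuclideanSpace ℝ (Fin d) :=
    fun u => g (X₁ u, X₂ u) - g (φ₁ u, φ₂ u) with hh
  have hcont : ContinuousOn h (Icc 0 1) := by
    apply ContinuousOn.sub
    · exact hg.continuous.comp_continuousOn (hX₁.prodMk hX₂)
    · exact hg.continuous.comp_continuousOn (hφ₁.prodMk hφ₂)
  have hB := holder_aux d m L g X₁ φ₁ X₂ φ₂ hg hX₁ hX₂ hφ₁ hφ₂ heq M hM hsup
  -- increment formula
  have hint : ∀ a ∈ Icc (0:ℝ) 1, ∀ b ∈ Icc (0:ℝ) 1, IntervalIntegrable h volume a b := by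
    intro a ha b hb
    apply (hcont.mono _).intervalIntegrable
    exact uIcc_subset_Icc ha hb
  have key : (X₁ t - φ₁ t) - (X₁ s - φ₁ s) = ∫ u in s..t, h u := by
    rw [heq t ht, heq s hs]
    exact intervalIntegral.integral_interval_sub_left
      (hint 0 (left_mem_Icc.2 zero_le_one) t ht) (hint 0 (left_mem_Icc.2 zero_le_one) s hs)
  rw [key]
  have hbound : ∀ u ∈ Set.uIoc s t, ‖h u‖ ≤ (L:ℝ) * (M * Real.exp L + M) := by
    intro u hu
    have hu' : u ∈ Icc (0:ℝ) 1 := by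
      have := Set.uIoc_subset_uIcc hu
      exact (uIcc_subset_Icc hs ht) this
    have h1 : ‖h u‖ ≤ (L:ℝ) * ‖((X₁ u, X₂ u) : _ × _) - (φ₁ u, φ₂ u)‖ := by
      simpa [dist_eq_norm] using hg.dist_le_mul (X₁ u, X₂ u) (φ₁ u, φ₂ u)
    have h2 : ‖((X₁ u, X₂ u) : _ × _) - (φ₁ u, φ₂ u)‖ ≤ ‖X₁ u - φ₁ u‖ + ‖X₂ u - φ₂ u‖ := by
      rw [Prod.norm_def]
      exact max_le (le_add_of_nonneg_right (norm_nonneg _))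
        (le_add_of_nonneg_left (norm_nonneg _))
    calc ‖h u‖ ≤ (L:ℝ) * (‖X₁ u - φ₁ u‖ + ‖X₂ u - φ₂ u‖) := h1.trans (by gcongr)
      _ ≤ (L:ℝ) * (M * Real.exp L + M) := by
          gcongr
          · exact hB u hu'
          · exact hsup u hu'
  have hnorm : ‖∫ u in s..t, h u‖ ≤ (L:ℝ) * (M * Real.exp L + M) * |t - s| :=
    intervalIntegral.norm_integral_le_of_norm_le_const hbound
  refine hnorm.trans ?_
  have hts : |t - s| ≤ |t - s| ^ α := by
    rcases eq_or_lt_of_le (abs_nonneg (t - s)) with h0 | h0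
    · rw [← h0, Real.zero_rpow (ne_of_gt hα.1)]
    · have h1 : |t - s| ≤ 1 := by
        rw [abs_le]
        constructor <;> nlinarith [hs.1, hs.2, ht.1, ht.2]
      calc |t - s| = |t - s| ^ (1:ℝ) := (Real.rpow_one _).symm
        _ ≤ |t - s| ^ α := Real.rpow_le_rpow_of_exponent_ge h0 h1 hα.2.le
  calc (L:ℝ) * (M * Real.exp L + M) * |t - s|
      = ((L:ℝ) * (Real.exp L + 1)) * M * |t - s| := by ring
    _ ≤ ((L:ℝ) * (Real.exp L + 1)) * M * |t - s| ^ α :=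
        mul_le_mul_of_nonneg_left hts (by positivity)
    _ ≤ ((L:ℝ) * (Real.exp L + 1) + 1) * M * |t - s| ^ α := by
        have hx : (0:ℝ) ≤ |t - s| ^ α := by positivity
        have h2 : (L:ℝ) * (Real.exp L + 1) ≤ (L:ℝ) * (Real.exp L + 1) + 1 := by linarith
        exact mul_le_mul_of_nonneg_right (mul_le_mul_of_nonneg_right h2 hM) hx
end

section
/- Suppose random variables $J_\varepsilon$ and events $A_\varepsilon$ with $\mathbb{P}(A_\varepsilon)\ge \exp(-C_3/\varepsilon^q)$ satisfy $\mathbb{P}(\{|J_\varepsilon|>\xi\}\cap A_\varepsilon)\le \exp(-\xi^2/(2K\varepsilon^{r}))$ for all $\xi>0$, with constants $C_3,K>0$ and $0<q<r$. Then $\limsup_{\varepsilon\to 0} E[\exp(J_\varepsilon)\mid A_\varepsilon]\le 1$. -/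
open MeasureTheory Filter Set

private lemma rpow_tendsto_zero' {a : ℝ} (ha : 0 < a) :
    Tendsto (fun ε : ℝ => ε ^ a) (nhdsWithin 0 (Set.Ioi 0)) (nhds 0) := by
  have h := (Real.continuousAt_rpow_const 0 a (Or.inr ha.le)).tendsto
  rw [Real.zero_rpow ha.ne'] at h
  exact h.mono_left nhdsWithin_le_nhds

private lemma rpow_tendsto_atTop' {a : ℝ} (ha : a < 0) :
    Tendsto (fun ε : ℝ => ε ^ a) (nhdsWithin 0 (Set.Ioi 0)) atTop := by
  have h1 : Tendsto (fun ε : ℝ => ε ^ (-a)) (nhdsWithin 0 (Set.Ioi 0))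
      (nhdsWithin 0 (Set.Ioi 0)) := by
    apply tendsto_nhdsWithin_of_tendsto_nhds_of_eventually_within _
      (rpow_tendsto_zero' (by linarith))
    filter_upwards [self_mem_nhdsWithin] with ε (hε : (0:ℝ) < ε)
    exact Real.rpow_pos_of_pos hε _
  refine (tendsto_inv_nhdsGT_zero.comp h1).congr' ?_
  filter_upwards [self_mem_nhdsWithin] with ε (hε : (0:ℝ) < ε)
  show (ε ^ (-a))⁻¹ = ε ^ a
  rw [← Real.rpow_neg hε.le, neg_neg]

private lemma key_estimate {Ω : Type*} [MeasurableSpace Ω] (P : Measure Ω)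
    [IsProbabilityMeasure P] {J : Ω → ℝ} {A : Set Ω} (hJ : Measurable J)
    {c δ : ℝ} (hc : 0 < c) (hδ : 0 < δ) (hp : 2 ≤ δ / c)
    (htail : ∀ ξ : ℝ, 0 < ξ →
      P ({ω | ξ < |J ω|} ∩ A) ≤ ENNReal.ofReal (Real.exp (-ξ ^ 2 / c))) :
    ∫ ω in A, Real.exp (J ω) ∂P
      ≤ Real.exp δ * (P A).toReal + Real.exp (δ * (1 - δ / c)) := by
  set p := δ / c with hpdef
  have hp1 : (1:ℝ) < p := by linarith
  set a := Real.exp δ with hadef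
  have ha1 : 1 < a := by rw [hadef, ← Real.exp_zero]; exact Real.exp_lt_exp.mpr hδ
  have ha0 : 0 < a := lt_trans one_pos ha1
  have hmeas : Measurable fun ω => Real.exp (J ω) := Real.measurable_exp.comp hJ
  have h1 : ∫ ω in A, Real.exp (J ω) ∂P
      = (∫⁻ t in Set.Ioi (0:ℝ), (P.restrict A) {ω | t < Real.exp (J ω)}).toReal := by
    rw [MeasureTheory.integral_eq_lintegral_of_nonneg_ae
        (ae_of_all _ fun ω => (Real.exp_pos (J ω)).le) hmeas.aestronglyMeasurable,
      lintegral_eq_lintegral_meas_lt _ (ae_of_all _ fun ω => (Real.exp_pos (J ω)).le)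
        hmeas.aemeasurable]
  have htb : ∀ t ∈ Set.Ioi a,
      (P.restrict A) {ω | t < Real.exp (J ω)} ≤ ENNReal.ofReal (t ^ (-p)) := by
    intro t ht
    rw [Set.mem_Ioi] at ht
    have ht0 : 0 < t := lt_trans ha0 ht
    have hlog : δ < Real.log t := (Real.lt_log_iff_exp_lt ht0).mpr ht
    have hlt0 : 0 < Real.log t := lt_trans hδ hlog
    rw [Measure.restrict_apply (measurableSet_lt measurable_const hmeas)]
    have hsub : {ω | t < Real.exp (J ω)} ∩ A ⊆ {ω | Real.log t < |J ω|} ∩ A := by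
      rintro ω ⟨h₁, h₂⟩
      refine ⟨Set.mem_setOf.mpr (lt_of_lt_of_le ?_ (le_abs_self _)), h₂⟩
      have := Real.log_lt_log (by positivity) h₁
      rwa [Real.log_exp] at this
    refine le_trans (le_trans (measure_mono hsub) (htail _ hlt0)) ?_
    apply ENNReal.ofReal_le_ofReal
    rw [Real.rpow_def_of_pos ht0]
    apply Real.exp_le_exp.mpr
    rw [hpdef, show Real.log t * -(δ / c) = -(Real.log t * δ) / c by ring]
    gcongr
    nlinarith
  have hsplit : ∫⁻ t in Set.Ioi (0:ℝ), (P.restrict A) {ω | t < Real.exp (J ω)}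
      ≤ ENNReal.ofReal a * P A + ENNReal.ofReal (a ^ (1 - p) / (p - 1)) := by
    rw [← Set.Ioc_union_Ioi_eq_Ioi ha0.le,
      lintegral_union measurableSet_Ioi Set.Ioc_disjoint_Ioi_same]
    have p1 : ∫⁻ t in Set.Ioc (0:ℝ) a, (P.restrict A) {ω | t < Real.exp (J ω)}
        ≤ ENNReal.ofReal a * P A := by
      refine le_trans (setLIntegral_mono' measurableSet_Ioc
        (g := fun _ => P A) (fun t _ => ?_)) ?_
      · refine le_trans (measure_mono (Set.subset_univ _)) ?_
        rw [Measure.restrict_apply_univ]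
      · rw [setLIntegral_const, Real.volume_Ioc, sub_zero, mul_comm]
    have p2 : ∫⁻ t in Set.Ioi a, (P.restrict A) {ω | t < Real.exp (J ω)}
        ≤ ENNReal.ofReal (a ^ (1 - p) / (p - 1)) := by
      refine le_trans (setLIntegral_mono' measurableSet_Ioi htb) ?_
      have hint : IntegrableOn (fun t : ℝ => t ^ (-p)) (Set.Ioi a) :=
        integrableOn_Ioi_rpow_of_lt (by linarith) ha0
      have hnn : 0 ≤ᵐ[volume.restrict (Set.Ioi a)] fun t : ℝ => t ^ (-p) := by
        refine (ae_restrict_iff' measurableSet_Ioi).mpr (ae_of_all _ fun t ht => ?_)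
        exact Real.rpow_nonneg (le_of_lt (lt_trans ha0 ht)) _
      rw [← MeasureTheory.ofReal_integral_eq_lintegral_ofReal hint hnn]
      apply ENNReal.ofReal_le_ofReal
      rw [integral_Ioi_rpow_of_lt (by linarith) ha0,
        show (-p + 1 : ℝ) = -(p - 1) by ring, neg_div_neg_eq,
        show (1 - p : ℝ) = -(p - 1) by ring]
    exact add_le_add p1 p2
  rw [h1]
  have hfin1 : ENNReal.ofReal a * P A ≠ ⊤ :=
    ENNReal.mul_ne_top ENNReal.ofReal_ne_top (measure_ne_top P A)
  refine le_trans (ENNReal.toReal_mono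
    (ENNReal.add_ne_top.mpr ⟨hfin1, ENNReal.ofReal_ne_top⟩) hsplit) ?_
  rw [ENNReal.toReal_add hfin1 ENNReal.ofReal_ne_top, ENNReal.toReal_mul,
    ENNReal.toReal_ofReal ha0.le,
    ENNReal.toReal_ofReal (div_nonneg (Real.rpow_nonneg ha0.le _) (by linarith))]
  have hrw : a ^ (1 - p) = Real.exp (δ * (1 - p)) := by
    rw [hadef, Real.rpow_def_of_pos (Real.exp_pos δ), Real.log_exp, mul_comm]
  rw [hrw]
  gcongr
  exact div_le_self (Real.exp_nonneg _) (by linarith)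

/-- **Small-ball remainder estimate.** Suppose random variables `J ε` and events `A ε`
with `ℙ(A ε) ≥ exp(-C₃/ε^q)` satisfy the tail bound
`ℙ({|J ε| > ξ} ∩ A ε) ≤ exp(-ξ²/(2 K ε^r))` for all `ξ > 0`, where `C₃, K > 0` and
`0 < q < r`. Then `limsup_{ε → 0} E[exp (J ε) ∣ A ε] ≤ 1`, with
`E[· ∣ A] = E[· 1_A]/ℙ(A)`. -/
theorem small_ball_remainder_limsup {Ω : Type*} [MeasurableSpace Ω]
    (P : Measure Ω) [IsProbabilityMeasure P]
    (J : ℝ → Ω → ℝ) (A : ℝ → Set Ω) (C₃ K q r : ℝ)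
    (hC₃ : 0 < C₃) (hK : 0 < K) (hq : 0 < q) (hqr : q < r)
    (hmeasJ : ∀ ε, 0 < ε → Measurable (J ε))
    (hmeasA : ∀ ε, 0 < ε → MeasurableSet (A ε))
    (hlow : ∀ ε : ℝ, 0 < ε → ENNReal.ofReal (Real.exp (-C₃ / ε ^ q)) ≤ P (A ε))
    (htail : ∀ ε : ℝ, 0 < ε → ∀ ξ : ℝ, 0 < ξ →
      P ({ω | ξ < |J ε ω|} ∩ A ε) ≤ ENNReal.ofReal (Real.exp (-ξ ^ 2 / (2 * K * ε ^ r)))) :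
    Filter.limsup
      (fun ε => (∫ ω in A ε, Real.exp (J ε ω) ∂P) / (P (A ε)).toReal)
      (nhdsWithin 0 (Set.Ioi 0)) ≤ 1 := by
  set L := nhdsWithin (0:ℝ) (Set.Ioi 0) with hL
  have hrq : (0:ℝ) < r - q := by linarith
  set s : ℝ := (r - q) / 4 with hs
  have hs0 : 0 < s := by positivity
  set B : ℝ → ℝ := fun ε =>
    Real.exp (ε ^ s) + Real.exp (ε ^ s * (1 - ε ^ s / (2 * K * ε ^ r)) + C₃ / ε ^ q) with hB
  -- eventually `δ/c ≥ 2`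
  have hptend : Tendsto (fun ε : ℝ => ε ^ (s - r) / (2 * K)) L atTop :=
    (rpow_tendsto_atTop' (by simp only [hs]; linarith)).atTop_div_const (by positivity)
  have hev2 : ∀ᶠ ε in L, 2 ≤ ε ^ s / (2 * K * ε ^ r) := by
    filter_upwards [self_mem_nhdsWithin, hptend.eventually_ge_atTop 2]
      with ε (hε : (0:ℝ) < ε) h2
    have : ε ^ s / (2 * K * ε ^ r) = ε ^ (s - r) / (2 * K) := by
      rw [Real.rpow_sub hε, div_div, mul_comm]
    rw [this]; exact h2
  -- eventual pointwise bound
  have hevle : ∀ᶠ ε in L,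
      (∫ ω in A ε, Real.exp (J ε ω) ∂P) / (P (A ε)).toReal ≤ B ε := by
    filter_upwards [self_mem_nhdsWithin, hev2] with ε (hε : (0:ℝ) < ε) h2
    have hc : (0:ℝ) < 2 * K * ε ^ r := by
      have := Real.rpow_pos_of_pos hε r; positivity
    have hδ : (0:ℝ) < ε ^ s := Real.rpow_pos_of_pos hε s
    have hkey := key_estimate P (hmeasJ ε hε) hc hδ h2 (htail ε hε)
    have hPA : Real.exp (-C₃ / ε ^ q) ≤ (P (A ε)).toReal := by
      have := ENNReal.toReal_mono (measure_ne_top P _) (hlow ε hε)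
      rwa [ENNReal.toReal_ofReal (Real.exp_nonneg _)] at this
    have hPA0 : 0 < (P (A ε)).toReal := lt_of_lt_of_le (Real.exp_pos _) hPA
    set R := Real.exp (ε ^ s * (1 - ε ^ s / (2 * K * ε ^ r))) with hR
    calc (∫ ω in A ε, Real.exp (J ε ω) ∂P) / (P (A ε)).toReal
        ≤ (Real.exp (ε ^ s) * (P (A ε)).toReal + R) / (P (A ε)).toReal := by gcongr
      _ = Real.exp (ε ^ s) + R / (P (A ε)).toReal := by
          rw [add_div, mul_div_assoc, div_self hPA0.ne', mul_one]
      _ ≤ Real.exp (ε ^ s) + R / Real.exp (-C₃ / ε ^ q) := by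
          have hR0 : (0:ℝ) ≤ R := Real.exp_nonneg _
          gcongr
      _ = B ε := by
          show _ = Real.exp (ε ^ s) +
            Real.exp (ε ^ s * (1 - ε ^ s / (2 * K * ε ^ r)) + C₃ / ε ^ q)
          rw [neg_div, Real.exp_neg, div_eq_mul_inv, inv_inv, hR, ← Real.exp_add]
  -- the bound tends to 1
  have hBtend : Tendsto B L (nhds 1) := by
    have h1 : Tendsto (fun ε : ℝ => Real.exp (ε ^ s)) L (nhds 1) := by
      have := Real.continuous_exp.continuousAt.tendsto.comp (rpow_tendsto_zero' hs0)
      simpa [Function.comp_def] using this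
    have h2 : Tendsto
        (fun ε : ℝ => Real.exp (ε ^ s * (1 - ε ^ s / (2 * K * ε ^ r)) + C₃ / ε ^ q))
        L (nhds 0) := by
      apply Real.tendsto_exp_atBot.comp
      have hfac : Tendsto
          (fun ε : ℝ => ε ^ (2 * s - r) *
            (ε ^ (r - s) - 1 / (2 * K) + C₃ * ε ^ ((r - q) / 2))) L atBot := by
        have hC : -(1 / (2 * K)) < 0 := by
          have : (0:ℝ) < 1 / (2 * K) := by positivity
          linarith
        refine Filter.Tendsto.atTop_mul_neg hC
          (rpow_tendsto_atTop' (by simp only [hs]; linarith)) ?_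
        have := ((rpow_tendsto_zero' (by simp only [hs]; linarith : (0:ℝ) < r - s)).sub_const
          (1 / (2 * K))).add ((rpow_tendsto_zero' (by positivity : (0:ℝ) < (r - q) / 2)).const_mul C₃)
        simpa using this
      apply hfac.congr'
      filter_upwards [self_mem_nhdsWithin] with ε (hε : (0:ℝ) < ε)
      have hX : (0:ℝ) < ε ^ s := Real.rpow_pos_of_pos hε s
      have hY : (0:ℝ) < ε ^ r := Real.rpow_pos_of_pos hε r
      have hZ : (0:ℝ) < ε ^ q := Real.rpow_pos_of_pos hε q
      have i1 : ε ^ (2 * s - r) = ε ^ s * ε ^ s / ε ^ r := by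
        rw [show (2 * s - r : ℝ) = s + s - r by ring, Real.rpow_sub hε, Real.rpow_add hε]
      have i2 : ε ^ (r - s) = ε ^ r / ε ^ s := Real.rpow_sub hε r s
      have i3 : ε ^ ((r - q) / 2) = ε ^ r / ε ^ s / ε ^ s / ε ^ q := by
        rw [show ((r - q) / 2 : ℝ) = r - s - s - q by rw [hs]; ring,
          Real.rpow_sub hε, Real.rpow_sub hε, Real.rpow_sub hε]
      show ε ^ (2 * s - r) * (ε ^ (r - s) - 1 / (2 * K) + C₃ * ε ^ ((r - q) / 2))
          = ε ^ s * (1 - ε ^ s / (2 * K * ε ^ r)) + C₃ / ε ^ q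
      rw [i1, i2, i3]
      field_simp
    have := h1.add h2
    simpa using this
  have hcob : IsCoboundedUnder (· ≤ ·) L
      (fun ε => (∫ ω in A ε, Real.exp (J ε ω) ∂P) / (P (A ε)).toReal) :=
    isCoboundedUnder_le_of_le L (x := 0) fun ε =>
      div_nonneg (integral_nonneg fun ω => (Real.exp_pos _).le) ENNReal.toReal_nonneg
  refine le_trans (limsup_le_limsup hevle hcob hBtend.isBoundedUnder_le) ?_
  exact le_of_eq hBtend.limsup_eq
end
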